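/- arXiv:2302.11221 — 2 statements merged into one kernel-verified Lean document; each statement's English description precedes it below -/
import Mathlib

section
/- For integers n ≥ r ≥ 1, the q-analog [p_n^{(r)}]_q equals the determinant of the (n−r+1)×(n−r+1) lower-Hessenberg matrix M whose entries are: M_{i,1} = [r+i−1 choose r]_q · e_{r+i−1} for 1 ≤ i ≤ n−r+1; M_{i,i+1} = 1 for 1 ≤ i ≤ n−r; M_{i,j} = e_{i−j+1} for 2 ≤ j ≤ i ≤ n−r+1; and M_{i,j} = 0 for j > i+1. -/
open MvPolynomial PowerSeries

noncomputable section

/-- The field `ℚ(q)` of rational functions in the indeterminate `q`. -/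
abbrev K : Type := RatFunc ℚ

/-- The indeterminate `q` in `ℚ(q)`. -/
def qq : K := RatFunc.X

/-- `[n]_x = 1 + x + ⋯ + x^{n-1}` (so `[0]_x = 0`). -/
def qNat (x : K) (n : ℕ) : K := ∑ i ∈ Finset.range n, x ^ i

/-- `[n]_x! = [1]_x [2]_x ⋯ [n]_x` (so `[0]_x! = 1`). -/
def qFact (x : K) (n : ℕ) : K := ∏ i ∈ Finset.range n, qNat x (i + 1)

/-- The `q`-binomial coefficient `[n choose k]_x`, equal to
`[n]_x!/([k]_x! [n-k]_x!)` for `n ≥ k ≥ 0` and to `0` otherwise. -/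
def qBinom (x : K) (n k : ℕ) : K :=
  if k ≤ n then qFact x n / (qFact x k * qFact x (n - k)) else 0

/-- `p_n^{(r)}`: the sum of the monomial symmetric polynomials `m_λ` over the
partitions `λ` of `n` of length `r` (in `N` variables, over `ℚ(q)`).
For `r = 0` this automatically gives `δ_{n,0}`. -/
def pnr (N n r : ℕ) : MvPolynomial (Fin N) K :=
  ∑ μ ∈ Finset.univ.filter (fun μ : Nat.Partition n => μ.parts.card = r),
    msymm (Fin N) K μ

/-- `E(t) = ∑_{m ≥ 0} e_m t^m`. -/
def Eser (N : ℕ) : PowerSeries (MvPolynomial (Fin N) K) :=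
  PowerSeries.mk fun m => esymm (Fin N) K m

/-- The property of being "the" `q`-derivative operator on power series over
`MvPolynomial (Fin N) ℚ(q)`: `Dq` satisfies `((q−1)·t) · Dq F = F(qt) − F(t)`
for every `F`.  (This characterizes `Dq F = (F(qt) − F(t))/((q−1)t)` uniquely,
since `(q−1)·t` is a nonzerodivisor.) -/
def IsqDeriv (N : ℕ)
    (Dq : PowerSeries (MvPolynomial (Fin N) K) → PowerSeries (MvPolynomial (Fin N) K)) : Prop :=
  ∀ F, (PowerSeries.C (MvPolynomial.C (qq - 1)) * PowerSeries.X) * Dq F =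
    PowerSeries.rescale (MvPolynomial.C qq) F - F

/-- The property that the family `P n r` is the family of `q`-analogs
`[p_n^{(r)}]_q`, i.e. it satisfies the defining generating identity
`[r]_q! · E(t) · ∑_{n≥r} [p_n^{(r)}]_q (−1)^{n−r} t^{n−r} = D_q^r E(t)` for every `r ≥ 0`,
where `Dq` is the `q`-derivative. -/
def IsqAnalog (N : ℕ)
    (Dq : PowerSeries (MvPolynomial (Fin N) K) → PowerSeries (MvPolynomial (Fin N) K))
    (P : ℕ → ℕ → MvPolynomial (Fin N) K) : Prop :=
  ∀ r : ℕ,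
    PowerSeries.C (MvPolynomial.C (qFact qq r)) * Eser N *
        (PowerSeries.mk fun m => (-1 : MvPolynomial (Fin N) K) ^ m * P (m + r) r) =
      Dq^[r] (Eser N)

end


noncomputable section Hessenberg

open Finset

variable {R : Type*} [CommRing R]

/-- Toeplitz lower-Hessenberg matrix with superdiagonal `1`. -/
def Tmat (e : ℕ → R) (m : ℕ) : Matrix (Fin m) (Fin m) R :=
  Matrix.of fun i j =>
    if (j : ℕ) = (i : ℕ) + 1 then 1
    else if (j : ℕ) ≤ (i : ℕ) then e ((i : ℕ) - (j : ℕ) + 1) else 0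

/-- Lower-Hessenberg matrix with prescribed first column `c`. -/
def hess (e c : ℕ → R) (k : ℕ) : Matrix (Fin (k + 1)) (Fin (k + 1)) R :=
  Matrix.of fun i j =>
    if (j : ℕ) = 0 then c (i : ℕ)
    else if (j : ℕ) = (i : ℕ) + 1 then 1
    else if (j : ℕ) ≤ (i : ℕ) then e ((i : ℕ) - (j : ℕ) + 1) else 0

def tdet (e : ℕ → R) (m : ℕ) : R := (Tmat e m).det

def hdet (e c : ℕ → R) (m : ℕ) : R := (hess e c m).det

lemma hess_apply (e c : ℕ → R) (k : ℕ) (x y : Fin (k + 1)) :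
    hess e c k x y =
      if (y : ℕ) = 0 then c (x : ℕ)
      else if (y : ℕ) = (x : ℕ) + 1 then 1
      else if (y : ℕ) ≤ (x : ℕ) then e ((x : ℕ) - (y : ℕ) + 1) else 0 := rfl

lemma Tmat_apply (e : ℕ → R) (m : ℕ) (x y : Fin m) :
    Tmat e m x y =
      if (y : ℕ) = (x : ℕ) + 1 then 1
      else if (y : ℕ) ≤ (x : ℕ) then e ((x : ℕ) - (y : ℕ) + 1) else 0 := rfl

lemma coe_succAbove {k : ℕ} (i : Fin (k + 1)) (x : Fin k) :
    ((i.succAbove x : Fin (k + 1)) : ℕ) =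
      if (x : ℕ) < (i : ℕ) then (x : ℕ) else (x : ℕ) + 1 := by
  rcases lt_or_ge (x : ℕ) (i : ℕ) with h | h
  · rw [Fin.succAbove, if_pos (by simpa [Fin.lt_def] using h), if_pos h]
    rfl
  · rw [Fin.succAbove, if_neg (by simp [Fin.lt_def, not_lt, h]), if_neg (not_lt.mpr h)]
    rfl

lemma det_minor (e c : ℕ → R) (k : ℕ) (i : Fin (k + 1)) :
    ((hess e c k).submatrix i.succAbove Fin.succ).det = tdet e (k - (i : ℕ)) := by
  have hik : (i : ℕ) ≤ k := Fin.is_le i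
  have hsum : (i : ℕ) + (k - (i : ℕ)) = k := by omega
  let ee : Fin (i : ℕ) ⊕ Fin (k - (i : ℕ)) ≃ Fin k := finSumFinEquiv.trans (finCongr hsum)
  rw [tdet, ← Matrix.det_submatrix_equiv_self ee]
  set M : Matrix _ _ R := (((hess e c k).submatrix i.succAbove Fin.succ).submatrix ee ee) with hM
  have hcoel : ∀ a : Fin (i : ℕ), ((ee (Sum.inl a) : Fin k) : ℕ) = (a : ℕ) := by
    intro a; simp [ee]
  have hcoer : ∀ b : Fin (k - (i : ℕ)), ((ee (Sum.inr b) : Fin k) : ℕ) = (i : ℕ) + b := by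
    intro b; simp [ee]
  have hrowl : ∀ a : Fin (i : ℕ), ((i.succAbove (ee (Sum.inl a)) : Fin (k + 1)) : ℕ) = (a : ℕ) := by
    intro a
    rw [coe_succAbove, hcoel, if_pos (by simpa [hcoel] using a.isLt)]
  have hrowr : ∀ a : Fin (k - (i : ℕ)),
      ((i.succAbove (ee (Sum.inr a)) : Fin (k + 1)) : ℕ) = (i : ℕ) + a + 1 := by
    intro a
    rw [coe_succAbove, hcoer, if_neg (by omega)]
  have h12 : M.toBlocks₁₂ = 0 := by
    ext a b
    simp only [Matrix.toBlocks₁₂, Matrix.of_apply, hM, Matrix.submatrix_apply,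
      Matrix.zero_apply]
    rw [hess_apply, Fin.val_succ, hrowl, hcoer]
    have ha := a.isLt
    rw [if_neg (by omega), if_neg (by omega), if_neg (by omega)]
  have h22 : M.toBlocks₂₂ = Tmat e (k - (i : ℕ)) := by
    ext a b
    simp only [Matrix.toBlocks₂₂, Matrix.of_apply, hM, Matrix.submatrix_apply]
    rw [hess_apply, Tmat_apply, Fin.val_succ, hrowr, hcoer]
    rw [if_neg (by omega)]
    by_cases h1 : (b : ℕ) = (a : ℕ) + 1
    · rw [if_pos (by omega), if_pos h1]
    · rw [if_neg (by omega), if_neg h1]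
      by_cases h2 : (b : ℕ) ≤ (a : ℕ)
      · rw [if_pos (by omega), if_pos h2]
        congr 1
        omega
      · rw [if_neg (by omega), if_neg h2]
  have h11 : M.toBlocks₁₁.det = 1 := by
    have htri : M.toBlocks₁₁.BlockTriangular OrderDual.toDual := by
      intro a b hab
      have hab' : (a : ℕ) < (b : ℕ) := hab
      simp only [Matrix.toBlocks₁₁, Matrix.of_apply, hM, Matrix.submatrix_apply]
      rw [hess_apply, Fin.val_succ, hrowl, hcoel]
      rw [if_neg (by omega), if_neg (by omega), if_neg (by omega)]
    rw [Matrix.det_of_lowerTriangular _ htri]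
    apply Finset.prod_eq_one
    intro a _
    simp only [Matrix.toBlocks₁₁, Matrix.of_apply, hM, Matrix.submatrix_apply]
    rw [hess_apply, Fin.val_succ, hrowl, hcoel]
    rw [if_neg (by omega), if_pos rfl]
  rw [← Matrix.fromBlocks_toBlocks M, h12, h22, Matrix.det_fromBlocks_zero₁₂, h11, one_mul]

lemma det_hess (e c : ℕ → R) (k : ℕ) :
    hdet e c k = ∑ j ∈ range (k + 1), (-1 : R) ^ j * c j * tdet e (k - j) := by
  rw [hdet, Matrix.det_succ_column_zero,
    ← Fin.sum_univ_eq_sum_range (fun j => (-1 : R) ^ j * c j * tdet e (k - j)) (k + 1)]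
  refine Finset.sum_congr rfl fun x _ => ?_
  rw [det_minor, hess_apply]
  simp

lemma tdet_succ (e : ℕ → R) (k : ℕ) :
    tdet e (k + 1) = ∑ j ∈ range (k + 1), (-1 : R) ^ j * e (j + 1) * tdet e (k - j) := by
  have hTm : Tmat e (k + 1) = hess e (fun m => e (m + 1)) k := by
    ext a b
    rw [Tmat_apply, hess_apply]
    by_cases hb : (b : ℕ) = 0
    · rw [if_pos hb, hb, if_neg (by omega), if_pos (by omega)]
      congr 1 <;> omega
    · rw [if_neg hb]
  rw [tdet, hTm, ← hdet, det_hess]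

lemma neg_one_pow_sub {k j : ℕ} (h : j ≤ k) : (-1 : R) ^ (k - j) = (-1 : R) ^ (k + j) := by
  have hkj : k + j = (k - j) + 2 * j := by omega
  rw [hkj, pow_add, pow_mul]
  norm_num

lemma hess_mul_key (e c : ℕ → R) (he : e 0 = 1) :
    (PowerSeries.mk e) * (PowerSeries.mk fun m => (-1 : R) ^ m * hdet e c m) =
      PowerSeries.mk c := by
  have hE : (PowerSeries.mk e) * (PowerSeries.mk fun m => (-1 : R) ^ m * tdet e m) = 1 := by
    ext n
    rw [PowerSeries.coeff_mul, Finset.Nat.sum_antidiagonal_eq_sum_range_succ_mk]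
    simp only [PowerSeries.coeff_mk, PowerSeries.coeff_one]
    cases n with
    | zero =>
      simp [he, tdet, Matrix.det_fin_zero]
    | succ k =>
      rw [if_neg (Nat.succ_ne_zero k)]
      rw [Finset.sum_range_succ']
      simp only [Nat.add_sub_add_right, Nat.sub_zero, he, one_mul]
      rw [tdet_succ, Finset.mul_sum, ← Finset.sum_add_distrib]
      apply Finset.sum_eq_zero
      intro j hj
      have hjk : j ≤ k := Nat.lt_succ_iff.mp (Finset.mem_range.mp hj)
      rw [neg_one_pow_sub hjk]
      ring
  have h2 : (PowerSeries.mk fun m => (-1 : R) ^ m * hdet e c m) =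
      (PowerSeries.mk c) * (PowerSeries.mk fun m => (-1 : R) ^ m * tdet e m) := by
    ext n
    rw [PowerSeries.coeff_mul, Finset.Nat.sum_antidiagonal_eq_sum_range_succ_mk]
    simp only [PowerSeries.coeff_mk]
    rw [det_hess, Finset.mul_sum]
    refine Finset.sum_congr rfl fun j hj => ?_
    have hjn : j ≤ n := Nat.lt_succ_iff.mp (Finset.mem_range.mp hj)
    rw [neg_one_pow_sub hjn]
    ring
  rw [h2, mul_comm (PowerSeries.mk c), ← mul_assoc, hE, one_mul]

end Hessenberg

section QLemmas



lemma qNat_eq_algebraMap (n : ℕ) :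
    qNat qq n = algebraMap (Polynomial ℚ) K (∑ i ∈ Finset.range n, Polynomial.X ^ i) := by
  rw [qNat, map_sum]
  refine Finset.sum_congr rfl fun i _ => ?_
  rw [map_pow, RatFunc.algebraMap_X, qq]

lemma qNat_ne_zero (m : ℕ) : qNat qq (m + 1) ≠ 0 := by
  rw [qNat_eq_algebraMap]
  intro h
  have h0 : (∑ i ∈ Finset.range (m + 1), (Polynomial.X : Polynomial ℚ) ^ i) = 0 :=
    RatFunc.algebraMap_injective ℚ (by simpa using h)
  have h1 := congrArg (fun p => Polynomial.coeff p 0) h0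
  simp [Polynomial.coeff_X_pow, Finset.sum_ite_eq'] at h1

lemma qFact_ne_zero (m : ℕ) : qFact qq m ≠ 0 := by
  rw [qFact]
  exact Finset.prod_ne_zero_iff.mpr fun i _ => qNat_ne_zero i

lemma qq_sub_one_ne_zero : qq - 1 ≠ 0 := by
  intro h
  have hX : qq = 1 := by linear_combination h
  rw [qq] at hX
  have : (Polynomial.X : Polynomial ℚ) = 1 := by
    apply RatFunc.algebraMap_injective ℚ
    rw [map_one, RatFunc.algebraMap_X, hX]
  have h1 := congrArg (fun p => Polynomial.coeff p 1) this
  simp [Polynomial.coeff_one] at h1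

lemma qq_geom (m : ℕ) : (qq - 1) * qNat qq (m + 1) = qq ^ (m + 1) - 1 := by
  rw [qNat, mul_comm]
  exact geom_sum_mul qq (m + 1)

lemma qFact_mul_qBinom (r m : ℕ) :
    qFact qq r * qBinom qq (r + m) r = ∏ i ∈ Finset.range r, qNat qq (m + 1 + i) := by
  rw [qBinom, if_pos (by omega)]
  have h1 : r + m - r = m := by omega
  rw [h1]
  have h2 : qFact qq (r + m) = qFact qq m * ∏ i ∈ Finset.range r, qNat qq (m + 1 + i) := by
    rw [qFact, show r + m = m + r from by omega, Finset.prod_range_add]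
    rw [qFact]
    congr 1
    exact Finset.prod_congr rfl fun i _ => by rw [show m + i + 1 = m + 1 + i from by omega]
  rw [h2]
  have hr := qFact_ne_zero r
  have hm := qFact_ne_zero m
  field_simp


end QLemmas

open Finset in
/-- for `n ≥ r ≥ 1`, `[p_n^{(r)}]_q` is the determinant of the
`(n−r+1) × (n−r+1)` lower-Hessenberg matrix `M` with (here `1`-based indices
`(i,j)` correspond to `0`-based indices `(i-1, j-1)`):
`M_{i,1} = [r+i−1 choose r]_q e_{r+i−1}`, `M_{i,i+1} = 1`,
`M_{i,j} = e_{i−j+1}` for `2 ≤ j ≤ i`, and `M_{i,j} = 0` for `j > i+1`. -/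
theorem qAnalog_eq_det (N n r : ℕ) (hN : n ≤ N) (hr : 1 ≤ r) (hrn : r ≤ n)
    (Dq : PowerSeries (MvPolynomial (Fin N) K) → PowerSeries (MvPolynomial (Fin N) K))
    (hDq : IsqDeriv N Dq)
    (P : ℕ → ℕ → MvPolynomial (Fin N) K) (hP : IsqAnalog N Dq P) :
    P n r =
      Matrix.det (Matrix.of fun i j : Fin (n - r + 1) =>
        if (j : ℕ) = 0 then
          MvPolynomial.C (qBinom qq (r + (i : ℕ)) r) * esymm (Fin N) K (r + (i : ℕ))
        else if (j : ℕ) = (i : ℕ) + 1 then 1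
        else if (j : ℕ) ≤ (i : ℕ) then esymm (Fin N) K ((i : ℕ) - (j : ℕ) + 1)
        else 0) := by
  have hDcoeff : ∀ (F : PowerSeries (MvPolynomial (Fin N) K)) (m : ℕ),
      PowerSeries.coeff m (Dq F) =
        MvPolynomial.C (qNat qq (m + 1)) * PowerSeries.coeff (m + 1) F := by
    intro F m
    have h := congrArg (PowerSeries.coeff (m + 1)) (hDq F)
    rw [mul_assoc, PowerSeries.coeff_C_mul, PowerSeries.coeff_succ_X_mul,
      map_sub (PowerSeries.coeff (m + 1)),
      PowerSeries.coeff_rescale] at h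
    have hC : (MvPolynomial.C (qq - 1) : MvPolynomial (Fin N) K) ≠ 0 := by
      intro h0
      exact qq_sub_one_ne_zero (MvPolynomial.C_injective (Fin N) K (by rw [h0, map_zero]))
    apply mul_left_cancel₀ hC
    rw [h, ← map_pow, ← mul_assoc, ← map_mul, qq_geom, map_sub, map_one, sub_mul, one_mul]
  have hDr : ∀ (ρ : ℕ) (m : ℕ), PowerSeries.coeff m (Dq^[ρ] (Eser N)) =
      MvPolynomial.C (∏ i ∈ Finset.range ρ, qNat qq (m + 1 + i)) * esymm (Fin N) K (m + ρ) := by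
    intro ρ
    induction ρ with
    | zero => intro m; simp [Eser]
    | succ ρ ih =>
      intro m
      rw [Function.iterate_succ_apply', hDcoeff, ih (m + 1), ← mul_assoc, ← map_mul]
      have h1 : m + 1 + ρ = m + (ρ + 1) := by omega
      have h2 : qNat qq (m + 1) * ∏ i ∈ Finset.range ρ, qNat qq (m + 1 + 1 + i)
          = ∏ i ∈ Finset.range (ρ + 1), qNat qq (m + 1 + i) := by
        rw [Finset.prod_range_succ', add_zero, mul_comm]
        congr 1
        exact Finset.prod_congr rfl fun i _ => by
          rw [show m + 1 + (i + 1) = m + 1 + 1 + i from by omega]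
      rw [h1, h2]
  have hDqrE : Dq^[r] (Eser N) =
      PowerSeries.C (MvPolynomial.C (qFact qq r)) *
        PowerSeries.mk (fun m => MvPolynomial.C (qBinom qq (r + m) r) * esymm (Fin N) K (r + m)) := by
    ext m
    rw [hDr r m, PowerSeries.coeff_C_mul, PowerSeries.coeff_mk, ← mul_assoc, ← map_mul,
      qFact_mul_qBinom, show r + m = m + r from by omega]
  have hCfacne : (PowerSeries.C (R := MvPolynomial (Fin N) K) (MvPolynomial.C (qFact qq r))) ≠ 0 := by
    intro h0
    have h1 := congrArg (PowerSeries.constantCoeff) h0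
    rw [PowerSeries.constantCoeff_C, map_zero] at h1
    exact qFact_ne_zero r (MvPolynomial.C_injective (Fin N) K (by rw [h1, map_zero]))
  have hES : Eser N * (PowerSeries.mk fun m => (-1 : MvPolynomial (Fin N) K) ^ m * P (m + r) r) =
      PowerSeries.mk (fun m => MvPolynomial.C (qBinom qq (r + m) r) * esymm (Fin N) K (r + m)) := by
    have h := hP r
    rw [hDqrE, mul_assoc] at h
    exact mul_left_cancel₀ hCfacne h
  have hEne : Eser N ≠ 0 := by
    intro h0
    have h1 := congrArg (PowerSeries.coeff 0) h0
    rw [map_zero] at h1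
    simp [Eser, MvPolynomial.esymm_zero] at h1
  have hkey := hess_mul_key (R := MvPolynomial (Fin N) K)
      (fun m => esymm (Fin N) K m)
      (fun m => MvPolynomial.C (qBinom qq (r + m) r) * esymm (Fin N) K (r + m))
      (by simp)
  have hEmk : Eser N = PowerSeries.mk (fun m => esymm (Fin N) K m) := rfl
  have hSd : (PowerSeries.mk fun m => (-1 : MvPolynomial (Fin N) K) ^ m * P (m + r) r) =
      PowerSeries.mk (fun m => (-1) ^ m *
        hdet (fun m => esymm (Fin N) K m)
             (fun m => MvPolynomial.C (qBinom qq (r + m) r) * esymm (Fin N) K (r + m)) m) := by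
    apply mul_left_cancel₀ hEne
    rw [hES]
    rw [hEmk, hkey]
  have h3 := congrArg (PowerSeries.coeff (n - r)) hSd
  rw [PowerSeries.coeff_mk, PowerSeries.coeff_mk, Nat.sub_add_cancel hrn] at h3
  have hne : ((-1 : MvPolynomial (Fin N) K) ^ (n - r)) ≠ 0 :=
    pow_ne_zero _ (neg_ne_zero.mpr one_ne_zero)
  have h4 := mul_left_cancel₀ hne h3
  rw [h4]
  rfl
end

section
/- For all integers n ≥ r ≥ 1, [p_n^{(r)}]_q = ∑_{j=r}^n (1−q)^{j−r} S_q[j,r] · p_n^{(j)}, where S_q[j,r] are the Carlitz q-Stirling numbers of the second kind. -/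
open MvPolynomial PowerSeries

/-- The Carlitz `q`-Stirling numbers of the second kind `S_q[n,k]` (as elements
of `ℚ(q)`): `S_q[0,0] = 1`, `S_q[n,k] = 0` if `k > n` or (`n > 0` and `k = 0`),
and `S_q[n+1,k+1] = S_q[n,k] + [k+1]_q S_q[n,k+1]`. -/
noncomputable def qStirling2 (x : K) : ℕ → ℕ → K
  | 0, 0 => 1
  | 0, _ + 1 => 0
  | _ + 1, 0 => 0
  | n + 1, k + 1 => qStirling2 x n k + qNat x (k + 1) * qStirling2 x n (k + 1)


namespace QAux
open Finset

lemma algnz {p : Polynomial ℚ} (hp : p ≠ 0) : (algebraMap (Polynomial ℚ) K) p ≠ 0 :=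
  RatFunc.algebraMap_ne_zero hp

lemma qq_eq : qq = algebraMap (Polynomial ℚ) K Polynomial.X := (RatFunc.algebraMap_X).symm

lemma qq_sub_one_ne : qq - 1 ≠ 0 := by
  rw [qq_eq, ← map_one (algebraMap (Polynomial ℚ) K), ← map_sub]
  apply algnz
  intro h
  have := Polynomial.X_sub_C_ne_zero (1 : ℚ)
  simp only [Polynomial.C_1] at this
  exact this h

lemma qq_ne_zero : qq ≠ 0 := by
  rw [qq_eq]
  exact algnz Polynomial.X_ne_zero

lemma qNat_eq_alg (k : ℕ) : qNat qq k = algebraMap (Polynomial ℚ) K (∑ i ∈ range k, Polynomial.X ^ i) := by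
  rw [qNat, map_sum]
  simp [qq_eq]

lemma qNat_ne_zero {k : ℕ} (hk : 1 ≤ k) : qNat qq k ≠ 0 := by
  rw [qNat_eq_alg]
  apply algnz
  intro h
  have h1 := congrArg (Polynomial.eval 1) h
  simp [Polynomial.eval_finset_sum] at h1
  omega

lemma qFact_ne_zero (k : ℕ) : qFact qq k ≠ 0 := by
  rw [qFact]
  exact Finset.prod_ne_zero_iff.2 fun i _ => qNat_ne_zero (Nat.le_add_left 1 i)

lemma qNat_add (a b : ℕ) : qNat qq (a + b) = qNat qq a + qq ^ a * qNat qq b := by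
  rw [qNat, qNat, qNat, Finset.sum_range_add, Finset.mul_sum]
  congr 1
  exact Finset.sum_congr rfl fun i _ => (pow_add qq a i)

lemma geom (m : ℕ) : (qq - 1) * qNat qq m = qq ^ m - 1 := by
  rw [qNat, mul_comm]
  exact geom_sum_mul qq m

lemma qFact_succ (r : ℕ) : qFact qq (r+1) = qFact qq r * qNat qq (r+1) :=
  Finset.prod_range_succ _ r

lemma qBinom_le {r i : ℕ} (h : i ≤ r) :
    qBinom qq r i = qFact qq r / (qFact qq i * qFact qq (r - i)) := if_pos h

lemma qBinom_gt {r i : ℕ} (h : r < i) : qBinom qq r i = 0 := if_neg (by omega)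

lemma qBinom_zero (r : ℕ) : qBinom qq r 0 = 1 := by
  rw [qBinom_le (Nat.zero_le r)]
  simp only [Nat.sub_zero, qFact, Finset.range_zero, Finset.prod_empty, one_mul]
  exact div_self (qFact_ne_zero r)

lemma qBinom_self (r : ℕ) : qBinom qq r r = 1 := by
  rw [qBinom_le le_rfl]
  simp only [Nat.sub_self, qFact, Finset.range_zero, Finset.prod_empty, mul_one]
  exact div_self (qFact_ne_zero r)

lemma qBinom_pascal {r i : ℕ} (h : i ≤ r) :
    qBinom qq (r+1) (i+1) = qBinom qq r i + qq^(i+1) * qBinom qq r (i+1) := by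
  rcases eq_or_lt_of_le h with rfl | hlt
  · rw [qBinom_self, qBinom_self, qBinom_gt (Nat.lt_succ_self i), mul_zero, add_zero]
  · have h1 : i + 1 ≤ r := hlt
    have key : qNat qq (r+1) = qNat qq (i+1) + qq^(i+1) * qNat qq (r - i) := by
      have := qNat_add (i+1) (r-i)
      rwa [show (i+1)+(r-i) = r+1 by omega] at this
    have f3 : qFact qq (r - i) = qFact qq (r - (i+1)) * qNat qq (r - i) := by
      rw [show r - i = (r-(i+1))+1 by omega, qFact_succ, show r-(i+1)+1 = r - i by omega]
    rw [qBinom_le (by omega), qBinom_le h, qBinom_le h1,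
      show r + 1 - (i+1) = r - i by omega, qFact_succ r, qFact_succ i, f3, key]
    have n1 := qFact_ne_zero r
    have n2 := qFact_ne_zero i
    have n3 := qFact_ne_zero (i+1)
    have n4 := qFact_ne_zero (r - i)
    have n5 := qFact_ne_zero (r - (i+1))
    have n6 := qNat_ne_zero (show 1 ≤ i+1 by omega)
    have n7 : qNat qq (r - i) ≠ 0 := qNat_ne_zero (by omega)
    field_simp

lemma qBinom_mul_qNat {r i : ℕ} (h : i ≤ r) :
    qBinom qq (r+1) i * qNat qq (r+1-i) = qNat qq (r+1) * qBinom qq r i := by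
  have f3 : qFact qq (r + 1 - i) = qFact qq (r - i) * qNat qq (r + 1 - i) := by
    rw [show r + 1 - i = (r-i)+1 by omega, qFact_succ, show r-i+1 = r+1-i by omega]
  rw [qBinom_le (by omega), qBinom_le h, qFact_succ r, f3]
  have n1 := qFact_ne_zero r
  have n2 := qFact_ne_zero i
  have n4 := qFact_ne_zero (r - i)
  have n7 : qNat qq (r + 1 - i) ≠ 0 := qNat_ne_zero (by omega)
  field_simp

lemma choose2_succ (m : ℕ) : (m+1).choose 2 = m.choose 2 + m := by
  rw [Nat.choose_succ_succ m 1, Nat.choose_one_right, Nat.add_comm]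

lemma gauss (r : ℕ) (x : K) :
    ∑ i ∈ range (r+1), (-1:K)^(r+i) * qq^(Nat.choose (r-i) 2) * qBinom qq r i * x^i
      = ∏ k ∈ range r, (x - qq^k) := by
  induction r with
  | zero => simp [qBinom_zero]
  | succ r ih =>
    rw [prod_range_succ, ← ih, Finset.sum_range_succ']
    have pasc : ∀ i ∈ range (r+1),
        (-1:K)^(r+1+(i+1)) * qq^(Nat.choose (r+1-(i+1)) 2) * qBinom qq (r+1) (i+1) * x^(i+1)
        = (-1:K)^(r+i) * qq^(Nat.choose (r-i) 2) * qBinom qq r i * x^i * x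
          + (-1:K)^(r+i) * qq^(Nat.choose (r-i) 2 + (i+1)) * qBinom qq r (i+1) * x^(i+1) := by
      intro i hi
      rw [mem_range] at hi
      rw [qBinom_pascal (by omega), show r+1-(i+1) = r - i by omega,
        show (-1:K)^(r+1+(i+1)) = (-1:K)^(r+i) by rw [show r+1+(i+1) = (r+i)+2 by omega]; ring,
        pow_add, pow_succ]
      ring
    rw [Finset.sum_congr rfl pasc, Finset.sum_add_distrib]
    have e1 : ∑ i ∈ range (r+1),
        (-1:K)^(r+i) * qq^(Nat.choose (r-i) 2) * qBinom qq r i * x^i * x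
        = (∑ i ∈ range (r+1), (-1:K)^(r+i) * qq^(Nat.choose (r-i) 2) * qBinom qq r i * x^i) * x := by
      rw [Finset.sum_mul]
    have last0 : (-1:K)^(r+r) * qq^(Nat.choose (r-r) 2 + (r+1)) * qBinom qq r (r+1) * x^(r+1) = 0 := by
      rw [qBinom_gt (Nat.lt_succ_self r)]; ring
    have e2 : (∑ i ∈ range (r+1),
          (-1:K)^(r+i) * qq^(Nat.choose (r-i) 2 + (i+1)) * qBinom qq r (i+1) * x^(i+1))
        + (-1:K)^(r+1+0) * qq^(Nat.choose (r+1-0) 2) * qBinom qq (r+1) 0 * x^0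
        = (∑ i ∈ range (r+1), (-1:K)^(r+i) * qq^(Nat.choose (r-i) 2) * qBinom qq r i * x^i)
            * (-qq^r) := by
      conv_lhs => rw [Finset.sum_range_succ]
      rw [last0, add_zero]
      conv_rhs => rw [Finset.sum_mul, Finset.sum_range_succ']
      congr 1
      · apply Finset.sum_congr rfl
        intro i hi
        rw [mem_range] at hi
        have ee : Nat.choose (r-i) 2 + (i+1) = Nat.choose (r-(i+1)) 2 + r := by
          rw [show r - i = (r - (i+1)) + 1 by omega, choose2_succ]
          omega
        rw [ee, show r+(i+1) = (r+i)+1 by omega, pow_add, pow_add, pow_add]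
        ring
      · rw [qBinom_zero, qBinom_zero, Nat.sub_zero, Nat.sub_zero, choose2_succ,
          pow_add, pow_add]
        ring
    rw [add_assoc, e1, e2]
    ring

lemma qStirling2_of_lt {j r : ℕ} (h : j < r) : qStirling2 qq j r = 0 := by
  induction j generalizing r with
  | zero => obtain ⟨r', rfl⟩ : ∃ r', r = r' + 1 := ⟨r - 1, by omega⟩; rfl
  | succ j ih =>
    obtain ⟨r', rfl⟩ : ∃ r', r = r' + 1 := ⟨r - 1, by omega⟩
    show qStirling2 qq j r' + qNat qq (r'+1) * qStirling2 qq j (r'+1) = 0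
    rw [ih (by omega), ih (by omega), mul_zero, add_zero]

lemma carlitz (j r : ℕ) :
    ∑ i ∈ range (r+1), (-1:K)^(r+i) * qq^(Nat.choose (r-i) 2) * qBinom qq r i * (qNat qq i)^j
      = qq^(Nat.choose r 2) * qFact qq r * qStirling2 qq j r := by
  induction j generalizing r with
  | zero =>
    have g := gauss r 1
    simp only [one_pow, mul_one] at g
    simp only [pow_zero, mul_one]
    rw [g]
    cases r with
    | zero => simp [qFact]; rfl
    | succ r' =>
      rw [qStirling2_of_lt (by omega), mul_zero]
      apply Finset.prod_eq_zero (Finset.mem_range.2 (Nat.succ_pos r'))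
      simp
  | succ j ih =>
    cases r with
    | zero =>
      have h0 : qNat qq 0 = 0 := by simp [qNat]
      have hs : qStirling2 qq (j+1) 0 = 0 := rfl
      simp [h0, hs]
    | succ r =>
      have expand : ∀ i ∈ range (r+1+1),
          (-1:K)^(r+1+i) * qq^(Nat.choose (r+1-i) 2) * qBinom qq (r+1) i * (qNat qq i)^(j+1)
          = (-1:K)^(r+1+i) * qq^(Nat.choose (r+1-i) 2) * qBinom qq (r+1) i * (qNat qq i)^j
              * qNat qq (r+1)
            - (-1:K)^(r+1+i) * qq^(Nat.choose (r+1-i) 2) * (qBinom qq (r+1) i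
              * qNat qq (r+1-i)) * qq^i * (qNat qq i)^j := by
        intro i hi
        rw [mem_range] at hi
        have key : qNat qq i = qNat qq (r+1) - qq^i * qNat qq (r+1-i) := by
          have h2 := qNat_add i (r+1-i)
          rw [show i + (r+1-i) = r+1 by omega] at h2
          rw [h2]; ring
        calc (-1:K)^(r+1+i) * qq^(Nat.choose (r+1-i) 2) * qBinom qq (r+1) i * (qNat qq i)^(j+1)
            = (-1:K)^(r+1+i) * qq^(Nat.choose (r+1-i) 2) * qBinom qq (r+1) i * (qNat qq i)^j
              * (qNat qq (r+1) - qq^i * qNat qq (r+1-i)) := by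
              rw [pow_succ]; nth_rewrite 2 [key]; ring
          _ = _ := by ring
      rw [Finset.sum_congr rfl expand, Finset.sum_sub_distrib, ← Finset.sum_mul]
      have eS : ∑ i ∈ range (r+1+1),
          (-1:K)^(r+1+i) * qq^(Nat.choose (r+1-i) 2) * (qBinom qq (r+1) i
            * qNat qq (r+1-i)) * qq^i * (qNat qq i)^j
          = -(qq^r * (qNat qq (r+1) * (∑ i ∈ range (r+1),
              (-1:K)^(r+i) * qq^(Nat.choose (r-i) 2) * qBinom qq r i * (qNat qq i)^j))) := by
        rw [Finset.sum_range_succ]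
        have tz : (-1:K)^(r+1+(r+1)) * qq^(Nat.choose (r+1-(r+1)) 2) * (qBinom qq (r+1) (r+1)
            * qNat qq (r+1-(r+1))) * qq^(r+1) * (qNat qq (r+1))^j = 0 := by
          have hq0 : qNat qq (r+1-(r+1)) = 0 := by rw [Nat.sub_self]; simp [qNat]
          rw [hq0]; ring
        rw [tz, add_zero, Finset.mul_sum, Finset.mul_sum, ← Finset.sum_neg_distrib]
        apply Finset.sum_congr rfl
        intro i hi
        rw [mem_range] at hi
        rw [qBinom_mul_qNat (by omega : i ≤ r)]
        have ee : Nat.choose (r+1-i) 2 + i = Nat.choose (r-i) 2 + r := by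
          rw [show r + 1 - i = (r - i) + 1 by omega, choose2_succ]
          omega
        have sgn : (-1:K)^(r+1+i) = -(-1:K)^(r+i) := by
          rw [show r+1+i = (r+i)+1 by omega, pow_succ]; ring
        calc (-1:K)^(r+1+i) * qq^(Nat.choose (r+1-i) 2) * (qNat qq (r+1) * qBinom qq r i)
              * qq^i * (qNat qq i)^j
            = (-1:K)^(r+1+i) * qq^(Nat.choose (r+1-i) 2 + i) * qNat qq (r+1) * qBinom qq r i
              * (qNat qq i)^j := by rw [pow_add]; ring
          _ = _ := by rw [ee, sgn, pow_add]; ring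
      rw [eS, ih r, ih (r+1)]
      have hS : qStirling2 qq (j+1) (r+1)
          = qStirling2 qq j r + qNat qq (r+1) * qStirling2 qq j (r+1) := rfl
      rw [hS, qFact_succ, choose2_succ, pow_add]
      ring

/-! ### Power series lemmas -/

variable {N : ℕ}

lemma C_ne_zero {x : K} (hx : x ≠ 0) : (MvPolynomial.C x : MvPolynomial (Fin N) K) ≠ 0 := by
  simpa using hx

lemma coeff_Dq {Dq : PowerSeries (MvPolynomial (Fin N) K) → PowerSeries (MvPolynomial (Fin N) K)}
    (hDq : IsqDeriv N Dq) (F : PowerSeries (MvPolynomial (Fin N) K)) (m : ℕ) :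
    PowerSeries.coeff m (Dq F)
      = MvPolynomial.C (qNat qq (m+1)) * PowerSeries.coeff (m+1) F := by
  have h := congrArg (PowerSeries.coeff (m+1)) (hDq F)
  rw [mul_assoc] at h
  rw [PowerSeries.coeff_C_mul, PowerSeries.coeff_succ_X_mul, LinearMap.map_sub,
    PowerSeries.coeff_rescale] at h
  have key : MvPolynomial.C (qq-1) * MvPolynomial.C (qNat qq (m+1))
      = (MvPolynomial.C qq : MvPolynomial (Fin N) K)^(m+1) - 1 := by
    rw [← map_mul, geom (m+1), map_sub, map_pow, map_one]
  apply mul_left_cancel₀ (C_ne_zero qq_sub_one_ne)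
  rw [h, ← mul_assoc, key, sub_mul, one_mul]

lemma coeff_Dq_iter
    {Dq : PowerSeries (MvPolynomial (Fin N) K) → PowerSeries (MvPolynomial (Fin N) K)}
    (hDq : IsqDeriv N Dq) (r m : ℕ) :
    PowerSeries.coeff m (Dq^[r] (Eser N))
      = MvPolynomial.C (∏ i ∈ range r, qNat qq (m+i+1)) * esymm (Fin N) K (m+r) := by
  induction r generalizing m with
  | zero => simp [Eser]
  | succ r ih =>
    rw [Function.iterate_succ_apply', coeff_Dq hDq, ih (m+1), ← mul_assoc, ← map_mul]
    have hp : ∏ i ∈ range (r+1), qNat qq (m+i+1)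
        = qNat qq (m+1) * ∏ i ∈ range r, qNat qq (m+1+i+1) := by
      rw [Finset.prod_range_succ', show m+0+1 = m+1 by omega, mul_comm]
      congr 1
      exact Finset.prod_congr rfl fun i _ => by rw [show m+(i+1)+1 = m+1+i+1 by omega]
    rw [hp, show m+1+r = m+(r+1) by omega]

/-! ### Coefficient lemmas for `esymm` and `pnr` -/

open MvPolynomial

/-- exponent finsupp of a subset -/
noncomputable def indic (t : Finset (Fin N)) : Fin N →₀ ℕ := ∑ i ∈ t, Finsupp.single i 1

lemma indic_apply (t : Finset (Fin N)) (i : Fin N) : indic t i = if i ∈ t then 1 else 0 := by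
  rw [indic, Finsupp.finset_sum_apply]
  simp [Finsupp.single_apply, Finset.sum_ite_eq' t i (fun _ => 1)]

lemma indic_support (t : Finset (Fin N)) : (indic t).support = t := by
  ext i
  rw [Finsupp.mem_support_iff, indic_apply]
  split <;> simp_all

lemma indic_of_01 {α : Fin N →₀ ℕ} (h : ∀ i, α i ≤ 1) : indic α.support = α := by
  ext i
  rw [indic_apply]
  by_cases hi : α i = 0
  · simp [hi, Finsupp.mem_support_iff]
  · have : α i = 1 := by have := h i; omega
    simp [this, Finsupp.mem_support_iff, hi]

lemma sum_eq_card_of_01 {α : Fin N →₀ ℕ} (h : ∀ i, α i ≤ 1) :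
    (α.sum fun _ n => n) = α.support.card := by
  rw [Finsupp.sum, Finset.card_eq_sum_ones]
  apply Finset.sum_congr rfl
  intro i hi
  rw [Finsupp.mem_support_iff] at hi
  have := h i
  omega

lemma coeff_esymm (m : ℕ) (α : Fin N →₀ ℕ) :
    MvPolynomial.coeff α (esymm (Fin N) K m)
      = if (∀ i, α i ≤ 1) ∧ α.support.card = m then 1 else 0 := by
  rw [esymm_eq_sum_monomial, MvPolynomial.coeff_sum]
  have hco : ∀ t : Finset (Fin N),
      MvPolynomial.coeff α (monomial (∑ i ∈ t, Finsupp.single i 1) (1:K))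
        = if indic t = α then 1 else 0 :=
    fun t => coeff_monomial α (indic t) 1
  rw [Finset.sum_congr rfl (fun t _ => hco t)]
  split
  case isTrue h =>
    rw [Finset.sum_eq_single α.support]
    · rw [if_pos (indic_of_01 h.1)]
    · intro t ht hne
      rw [if_neg]
      intro he
      exact hne (by rw [← he, indic_support])
    · intro habs
      exact absurd (Finset.mem_powersetCard_univ.2 h.2) habs
  case isFalse h =>
    apply Finset.sum_eq_zero
    intro t ht
    rw [if_neg]
    intro he
    apply h
    constructor
    · intro i; rw [← he, indic_apply]; split <;> omega
    · rw [← he, indic_support]; exact Finset.mem_powersetCard_univ.1 ht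

lemma mono_prod (m : Multiset (Fin N)) :
    ((m.map MvPolynomial.X).prod : MvPolynomial (Fin N) K)
      = monomial (Multiset.toFinsupp m) 1 := by
  induction m using Multiset.induction_on with
  | empty => simp
  | cons a s ih =>
    rw [Multiset.map_cons, Multiset.prod_cons, ih,
      show (a ::ₘ s) = {a} + s from (Multiset.singleton_add a s).symm, map_add,
      Multiset.toFinsupp_singleton,
      show (MvPolynomial.X a : MvPolynomial (Fin N) K)
        = monomial (Finsupp.single a 1) 1 from rfl,
      monomial_mul, one_mul]

lemma ofSym_card (n : ℕ) (s : Sym (Fin N) n) :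
    (Nat.Partition.ofSym s).parts.card = s.1.toFinset.card := by
  show (s.1.dedup.map s.1.count).card = _
  rw [Multiset.card_map, Multiset.card_toFinset]

lemma pnr_eq (n j : ℕ) :
    pnr N n j = ∑ s ∈ Finset.univ.filter (fun s : Sym (Fin N) n => s.1.toFinset.card = j),
      monomial (Multiset.toFinsupp s.1) (1:K) := by
  rw [pnr]
  have hmsymm : ∀ μ : Nat.Partition n, msymm (Fin N) K μ
      = ∑ s ∈ Finset.univ.filter (fun s : Sym (Fin N) n => Nat.Partition.ofSym s = μ),
        monomial (Multiset.toFinsupp s.1) (1:K) := by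
    intro μ
    have h1 := Finset.sum_subtype_eq_sum_filter
      (s := (Finset.univ : Finset (Sym (Fin N) n)))
      (fun s : Sym (Fin N) n => ((s.1.map MvPolynomial.X).prod : MvPolynomial (Fin N) K))
      (p := fun s : Sym (Fin N) n => Nat.Partition.ofSym s = μ)
    rw [Finset.subtype_univ] at h1
    refine Eq.trans ?_ (h1.trans ?_)
    · rfl
    · exact Finset.sum_congr rfl fun s _ => mono_prod s.1
  simp_rw [hmsymm]
  rw [Finset.sum_fiberwise_eq_sum_filter]
  apply Finset.sum_congr
  · apply Finset.filter_congr
    intro s _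
    simp only [Finset.mem_filter, Finset.mem_univ, true_and]
    rw [ofSym_card]
  · intros; rfl

lemma coeff_pnr (k j : ℕ) (α : Fin N →₀ ℕ) :
    MvPolynomial.coeff α (pnr N k j)
      = if (α.sum fun _ n => n) = k ∧ α.support.card = j then 1 else 0 := by
  rw [pnr_eq, MvPolynomial.coeff_sum]
  have hco : ∀ s : Sym (Fin N) k,
      MvPolynomial.coeff α (monomial (Multiset.toFinsupp s.1) (1:K))
        = if Multiset.toFinsupp s.1 = α then 1 else 0 :=
    fun s => coeff_monomial α (Multiset.toFinsupp s.1) 1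
  rw [Finset.sum_congr rfl (fun s _ => hco s)]
  split
  case isTrue h =>
    have hcard : Multiset.card α.toMultiset = k := by
      rw [Finsupp.card_toMultiset]; exact h.1
    refine (Finset.sum_eq_single_of_mem (⟨α.toMultiset, hcard⟩ : Sym (Fin N) k) ?_ ?_).trans ?_
    · refine Finset.mem_filter.2 ⟨Finset.mem_univ (α := Sym (Fin N) k) _, ?_⟩
      show α.toMultiset.toFinset.card = j
      rw [Finsupp.toFinset_toMultiset]
      exact h.2
    · intro s hs hne
      rw [if_neg]
      intro he
      apply hne
      apply Subtype.ext
      show s.1 = α.toMultiset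
      have := congrArg (Multiset.toFinsupp (α := Fin N)).symm he
      simpa using this
    · rw [if_pos (Finsupp.toMultiset_toFinsupp α)]
  case isFalse h =>
    apply Finset.sum_eq_zero
    intro s hs
    rw [if_neg]
    intro he
    apply h
    simp only [Finset.mem_filter, Finset.mem_univ, true_and] at hs
    constructor
    · rw [← he]
      have h2 := Finsupp.card_toMultiset (Multiset.toFinsupp s.1)
      rw [Multiset.toFinsupp_toMultiset] at h2
      have h3 : (Multiset.toFinsupp s.1).sum (fun _ n => n) = Multiset.card s.1 := h2.symm
      rw [h3, s.2]
    · rw [← he, Multiset.toFinsupp_support]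
      exact hs

/-! ### The master symmetric-function identity -/

lemma wtsum (β γ : Fin N →₀ ℕ) :
    ((β + γ).sum fun _ v => v) = (β.sum fun _ v => v) + (γ.sum fun _ v => v) :=
  Finsupp.sum_add_index' (fun _ => rfl) (fun _ _ _ => rfl)

lemma suppcard_le_wt (γ : Fin N →₀ ℕ) : γ.support.card ≤ γ.sum fun _ v => v := by
  rw [Finset.card_eq_sum_ones, Finsupp.sum]
  apply Finset.sum_le_sum
  intro i hi
  rw [Finsupp.mem_support_iff] at hi
  omega

lemma pnr_zero {k j : ℕ} (h : k < j) : pnr N k j = 0 := by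
  rw [pnr_eq]
  apply Finset.sum_eq_zero
  intro s hs
  exfalso
  simp only [Finset.mem_filter, Finset.mem_univ, true_and] at hs
  have h1 : s.1.toFinset.card ≤ Multiset.card s.1 := Multiset.toFinset_card_le s.1
  rw [hs, s.2] at h1
  omega

lemma inner_collapse (c : K) (n : ℕ) (α β γ : Fin N →₀ ℕ) (hbg : β + γ = α)
    (hα : (α.sum fun _ v => v) = n) :
    ∑ j ∈ range (n+1), ∑ k ∈ range (n+1), ((c-1)^j * ((-1:K)^(k+j) *
      ((if (∀ i, β i ≤ 1) ∧ β.support.card = n-k then (1:K) else 0) *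
       (if (γ.sum fun _ v => v) = k ∧ γ.support.card = j then (1:K) else 0))))
    = if (∀ i, β i ≤ 1) then
        (c-1)^(γ.support.card) * (-1:K)^((γ.sum fun _ v => v) + γ.support.card) else 0 := by
  have hsum : (β.sum fun _ v => v) + (γ.sum fun _ v => v) = n := by rw [← wtsum, hbg, hα]
  have hk0 : (γ.sum fun _ v => v) ≤ n := by omega
  have hj0 : γ.support.card ≤ γ.sum fun _ v => v := suppcard_le_wt γ
  have hstep : ∀ j ∈ range (n+1), ∀ k ∈ range (n+1),
      ((c-1)^j * ((-1:K)^(k+j) *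
        ((if (∀ i, β i ≤ 1) ∧ β.support.card = n-k then (1:K) else 0) *
         (if (γ.sum fun _ v => v) = k ∧ γ.support.card = j then (1:K) else 0))))
      = if (γ.sum fun _ v => v) = k then
          (if γ.support.card = j then (c-1)^j * ((-1:K)^(k+j) *
            (if (∀ i, β i ≤ 1) ∧ β.support.card = n-k then (1:K) else 0)) else 0) else 0 := by
    intro j _ k _
    by_cases h1 : (γ.sum fun _ v => v) = k
    · by_cases h2 : γ.support.card = j
      · rw [if_pos (And.intro h1 h2), if_pos h1, if_pos h2, mul_one]
      · rw [if_neg (show ¬((γ.sum fun _ v => v) = k ∧ γ.support.card = j) from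
            fun hh => h2 hh.2), if_pos h1, if_neg h2, mul_zero, mul_zero, mul_zero]
    · rw [if_neg (show ¬((γ.sum fun _ v => v) = k ∧ γ.support.card = j) from
        fun hh => h1 hh.1), if_neg h1, mul_zero, mul_zero, mul_zero]
  rw [Finset.sum_congr rfl (fun j hj => Finset.sum_congr rfl (fun k hk => hstep j hj k hk))]
  have hin : ∀ j ∈ range (n+1),
      (∑ k ∈ range (n+1), if (γ.sum fun _ v => v) = k then
        (if γ.support.card = j then (c-1)^j * ((-1:K)^(k+j) *
          (if (∀ i, β i ≤ 1) ∧ β.support.card = n-k then (1:K) else 0)) else 0) else 0)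
      = if γ.support.card = j then (c-1)^j * ((-1:K)^((γ.sum fun _ v => v)+j) *
          (if (∀ i, β i ≤ 1) ∧ β.support.card = n-(γ.sum fun _ v => v) then (1:K) else 0))
        else 0 := by
    intro j _
    rw [Finset.sum_ite_eq, if_pos (Finset.mem_range.2 (by omega))]
  rw [Finset.sum_congr rfl hin, Finset.sum_ite_eq, if_pos (Finset.mem_range.2 (by omega))]
  by_cases hb : ∀ i, β i ≤ 1
  · have hbcard : β.support.card = n - (γ.sum fun _ v => v) := by
      rw [← sum_eq_card_of_01 hb]; omega
    rw [if_pos hb, if_pos (And.intro hb hbcard), mul_one]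
  · rw [if_neg hb]
    rw [if_neg (fun hh => hb hh.1), mul_zero, mul_zero]

lemma powerset_split {M : Type*} [AddCommMonoid M] (A B : Finset (Fin N)) (hd : Disjoint A B)
    (f : Finset (Fin N) → M) :
    ∑ T ∈ (A ∪ B).powerset, f T = ∑ p ∈ A.powerset ×ˢ B.powerset, f (p.1 ∪ p.2) := by
  apply Finset.sum_nbij' (i := fun T => (T ∩ A, T ∩ B)) (j := fun p => p.1 ∪ p.2)
  · intro T hT
    rw [Finset.mem_powerset] at hT
    rw [Finset.mem_product]
    exact ⟨Finset.mem_powerset.2 Finset.inter_subset_right,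
      Finset.mem_powerset.2 Finset.inter_subset_right⟩
  · intro p hp
    rw [Finset.mem_product, Finset.mem_powerset, Finset.mem_powerset] at hp
    exact Finset.mem_powerset.2 (Finset.union_subset_union hp.1 hp.2)
  · intro T hT
    rw [Finset.mem_powerset] at hT
    ext i
    simp only [Finset.mem_union, Finset.mem_inter]
    constructor
    · rintro (⟨h, _⟩ | ⟨h, _⟩) <;> exact h
    · intro h
      rcases Finset.mem_union.1 (hT h) with h2 | h2
      · exact Or.inl ⟨h, h2⟩
      · exact Or.inr ⟨h, h2⟩
  · intro p hp
    rw [Finset.mem_product, Finset.mem_powerset, Finset.mem_powerset] at hp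
    have hdisj : ∀ i, i ∈ p.1 → i ∉ p.2 := fun i h1 h2 =>
      Finset.disjoint_left.1 hd (hp.1 h1) (hp.2 h2)
    have hdisj2 : ∀ i, i ∈ p.2 → i ∉ p.1 := fun i h1 h2 => hdisj i h2 h1
    have e1 : (p.1 ∪ p.2) ∩ A = p.1 := by
      ext i
      simp only [Finset.mem_inter, Finset.mem_union]
      constructor
      · rintro ⟨h1 | h1, h2⟩
        · exact h1
        · exact absurd (hp.2 h1) (Finset.disjoint_left.1 hd h2)
      · intro h; exact ⟨Or.inl h, hp.1 h⟩
    have e2 : (p.1 ∪ p.2) ∩ B = p.2 := by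
      ext i
      simp only [Finset.mem_inter, Finset.mem_union]
      constructor
      · rintro ⟨h1 | h1, h2⟩
        · exact absurd (hp.1 h1) (Finset.disjoint_right.1 hd h2)
        · exact h1
      · intro h; exact ⟨Or.inr h, hp.2 h⟩
    rw [e1, e2]
  · intro T hT
    rw [Finset.mem_powerset] at hT
    congr 1
    ext i
    simp only [Finset.mem_union, Finset.mem_inter]
    constructor
    · intro h
      rcases Finset.mem_union.1 (hT h) with h2 | h2
      · exact Or.inl ⟨h, h2⟩
      · exact Or.inr ⟨h, h2⟩
    · rintro (⟨h, _⟩ | ⟨h, _⟩) <;> exact h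

lemma pow_powerset (S : Finset (Fin N)) (y : K) :
    ∑ T ∈ S.powerset, y^(S.card - T.card) = (y+1)^S.card := by
  rw [Finset.sum_powerset]
  have hin : ∀ j ∈ range (S.card + 1), ∑ T ∈ Finset.powersetCard j S, y^(S.card - T.card)
      = (S.card.choose j : K) * y^(S.card - j) := by
    intro j _
    rw [Finset.sum_congr rfl (fun T hT => by rw [(Finset.mem_powersetCard.1 hT).2]),
      Finset.sum_const, Finset.card_powersetCard, nsmul_eq_mul]
  rw [Finset.sum_congr rfl hin, add_comm y 1, add_pow]
  apply Finset.sum_congr rfl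
  intro j _
  rw [one_pow, one_mul, mul_comm]

lemma alt_powerset (A : Finset (Fin N)) (hA : A.Nonempty) :
    ∑ T ∈ A.powerset, (-1:K)^(T.card) = 0 := by
  rw [Finset.sum_powerset]
  have hin : ∀ j ∈ range (A.card + 1), ∑ T ∈ Finset.powersetCard j A, (-1:K)^(T.card)
      = (-1:K)^j * (A.card.choose j : K) := by
    intro j _
    rw [Finset.sum_congr rfl (fun T hT => by rw [(Finset.mem_powersetCard.1 hT).2]),
      Finset.sum_const, Finset.card_powersetCard, nsmul_eq_mul, mul_comm]
  rw [Finset.sum_congr rfl hin]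
  have hads := add_pow (-1:K) 1 A.card
  simp only [one_pow, mul_one, neg_add_cancel] at hads
  rw [← hads, zero_pow (Finset.card_pos.2 hA).ne']

lemma L1 (c : K) (n : ℕ) :
    ∑ j ∈ range (n+1), MvPolynomial.C ((c-1)^j) *
      ∑ k ∈ range (n+1), MvPolynomial.C ((-1:K)^(k+j)) * (esymm (Fin N) K (n-k) * pnr N k j)
    = MvPolynomial.C (c^n) * esymm (Fin N) K n := by
  apply MvPolynomial.ext
  intro α
  simp only [MvPolynomial.coeff_sum, MvPolynomial.coeff_C_mul]
  simp only [MvPolynomial.coeff_mul, coeff_esymm, coeff_pnr]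
  by_cases hα : (α.sum fun _ v => v) = n
  case neg =>
    rw [if_neg, mul_zero]
    swap
    · intro hcond
      exact hα (by rw [sum_eq_card_of_01 hcond.1, hcond.2])
    apply Finset.sum_eq_zero
    intro j hj
    rw [Finset.mul_sum]
    apply Finset.sum_eq_zero
    intro k hk
    rw [Finset.mul_sum, Finset.mul_sum]
    apply Finset.sum_eq_zero
    intro x hx
    rw [Finset.mem_range] at hk
    rw [Finset.HasAntidiagonal.mem_antidiagonal] at hx
    by_cases h1 : (∀ i, x.1 i ≤ 1) ∧ x.1.support.card = n - k
    · by_cases h2 : (x.2.sum fun _ v => v) = k ∧ x.2.support.card = j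
      · exfalso
        apply hα
        rw [← hx, wtsum, sum_eq_card_of_01 h1.1, h1.2, h2.1]
        omega
      · rw [if_neg h2]; ring
    · rw [if_neg h1]; ring
  case pos =>
    have hswap : ∑ j ∈ range (n+1), ((c-1)^j * ∑ k ∈ range (n+1), ((-1:K)^(k+j) *
          ∑ x ∈ Finset.HasAntidiagonal.antidiagonal α,
            (if (∀ i, x.1 i ≤ 1) ∧ x.1.support.card = n-k then (1:K) else 0) *
            (if (x.2.sum fun _ v => v) = k ∧ x.2.support.card = j then (1:K) else 0)))
        = ∑ x ∈ Finset.HasAntidiagonal.antidiagonal α, ∑ j ∈ range (n+1), ∑ k ∈ range (n+1),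
            ((c-1)^j * ((-1:K)^(k+j) *
              ((if (∀ i, x.1 i ≤ 1) ∧ x.1.support.card = n-k then (1:K) else 0) *
               (if (x.2.sum fun _ v => v) = k ∧ x.2.support.card = j then (1:K) else 0)))) := by
      calc ∑ j ∈ range (n+1), ((c-1)^j * ∑ k ∈ range (n+1), ((-1:K)^(k+j) *
          ∑ x ∈ Finset.HasAntidiagonal.antidiagonal α,
            (if (∀ i, x.1 i ≤ 1) ∧ x.1.support.card = n-k then (1:K) else 0) *
            (if (x.2.sum fun _ v => v) = k ∧ x.2.support.card = j then (1:K) else 0)))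
          = ∑ j ∈ range (n+1), ∑ k ∈ range (n+1), ∑ x ∈ Finset.HasAntidiagonal.antidiagonal α,
            ((c-1)^j * ((-1:K)^(k+j) *
              ((if (∀ i, x.1 i ≤ 1) ∧ x.1.support.card = n-k then (1:K) else 0) *
               (if (x.2.sum fun _ v => v) = k ∧ x.2.support.card = j then (1:K) else 0)))) := by
            simp_rw [Finset.mul_sum]
        _ = ∑ j ∈ range (n+1), ∑ x ∈ Finset.HasAntidiagonal.antidiagonal α, ∑ k ∈ range (n+1),
            ((c-1)^j * ((-1:K)^(k+j) *
              ((if (∀ i, x.1 i ≤ 1) ∧ x.1.support.card = n-k then (1:K) else 0) *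
               (if (x.2.sum fun _ v => v) = k ∧ x.2.support.card = j then (1:K) else 0)))) :=
            Finset.sum_congr rfl (fun j _ => Finset.sum_comm)
        _ = ∑ x ∈ Finset.HasAntidiagonal.antidiagonal α, ∑ j ∈ range (n+1), ∑ k ∈ range (n+1),
            ((c-1)^j * ((-1:K)^(k+j) *
              ((if (∀ i, x.1 i ≤ 1) ∧ x.1.support.card = n-k then (1:K) else 0) *
               (if (x.2.sum fun _ v => v) = k ∧ x.2.support.card = j then (1:K) else 0)))) :=
            Finset.sum_comm
    rw [hswap]
    rw [Finset.sum_congr rfl (fun x hx =>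
      inner_collapse c n α x.1 x.2 (Finset.HasAntidiagonal.mem_antidiagonal.1 hx) hα)]
    rw [← Finset.sum_filter]
    -- bijection with subsets of the support
    have hbij : ∑ x ∈ (Finset.HasAntidiagonal.antidiagonal α).filter (fun x => ∀ i, x.1 i ≤ 1),
          (c-1)^(x.2.support.card) * (-1:K)^((x.2.sum fun _ v => v) + x.2.support.card)
        = ∑ T ∈ α.support.powerset,
          (c-1)^((α - indic T).support.card)
            * (-1:K)^(((α - indic T).sum fun _ v => v) + (α - indic T).support.card) := by
      apply Finset.sum_nbij' (i := fun x => x.1.support) (j := fun T => (indic T, α - indic T))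
      · intro x hx
        rw [Finset.mem_filter, Finset.HasAntidiagonal.mem_antidiagonal] at hx
        rw [Finset.mem_powerset]
        intro i hi
        rw [Finsupp.mem_support_iff] at hi ⊢
        have : x.1 i + x.2 i = α i := by
          rw [← Finsupp.add_apply, hx.1]
        omega
      · intro T hT
        rw [Finset.mem_powerset] at hT
        have hle : indic T ≤ α := by
          intro i
          rw [indic_apply]
          split
          case isTrue h =>
            have := Finsupp.mem_support_iff.1 (hT h)
            omega
          case isFalse h => omega
        rw [Finset.mem_filter, Finset.HasAntidiagonal.mem_antidiagonal]
        constructor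
        · rw [add_comm]
          exact tsub_add_cancel_of_le hle
        · intro i
          rw [indic_apply]
          split <;> omega
      · intro x hx
        rw [Finset.mem_filter, Finset.HasAntidiagonal.mem_antidiagonal] at hx
        have h1 : indic x.1.support = x.1 := indic_of_01 hx.2
        have h2 : α - x.1 = x.2 := by
          rw [← hx.1]
          exact add_tsub_cancel_left x.1 x.2
        rw [h1]
        exact Prod.ext rfl h2
      · intro T hT
        exact indic_support T
      · intro x hx
        rw [Finset.mem_filter, Finset.HasAntidiagonal.mem_antidiagonal] at hx
        have h1 : indic x.1.support = x.1 := indic_of_01 hx.2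
        have h2 : α - x.1 = x.2 := by
          rw [← hx.1]
          exact add_tsub_cancel_left x.1 x.2
        rw [h1, h2]
    rw [hbij]
    set S := α.support with hS
    set A1 := S.filter (fun i => α i = 1) with hA1
    set A2 := S.filter (fun i => ¬ (α i = 1)) with hA2
    have hu : A1 ∪ A2 = S := Finset.filter_union_filter_not_eq _ S
    have hd : Disjoint A1 A2 := Finset.disjoint_filter_filter_not S S _
    rw [show S.powerset = (A1 ∪ A2).powerset by rw [hu]]
    rw [powerset_split A1 A2 hd, Finset.sum_product]
    -- per-pair evaluation
    have hval : ∀ T1 ∈ A1.powerset, ∀ T2 ∈ A2.powerset,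
        (c-1)^((α - indic (T1 ∪ T2)).support.card)
          * (-1:K)^(((α - indic (T1 ∪ T2)).sum fun _ v => v)
              + (α - indic (T1 ∪ T2)).support.card)
        = (c-1)^(S.card - T1.card) * ((-1:K)^(n + S.card) * (-1:K)^(T2.card)) := by
      intro T1 hT1 T2 hT2
      rw [Finset.mem_powerset] at hT1 hT2
      have hT1S : T1 ⊆ S := hT1.trans (Finset.filter_subset _ S)
      have hT2S : T2 ⊆ S := hT2.trans (Finset.filter_subset _ S)
      have hTS : T1 ∪ T2 ⊆ S := Finset.union_subset hT1S hT2S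
      have hdT : Disjoint T1 T2 := hd.mono hT1 hT2
      -- support of the difference
      have hsupp : (α - indic (T1 ∪ T2)).support = S \ T1 := by
        ext i
        rw [Finsupp.mem_support_iff, Finsupp.tsub_apply, indic_apply, Finset.mem_sdiff]
        by_cases h1 : i ∈ T1
        · have he1 : α i = 1 := (Finset.mem_filter.1 (hT1 h1)).2
          simp [Finset.mem_union, h1, he1]
        · by_cases h2 : i ∈ T2
          · have h2' := Finset.mem_filter.1 (hT2 h2)
            have hne : α i ≠ 0 := Finsupp.mem_support_iff.1 h2'.1
            have hmem : i ∈ S := h2'.1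
            have hin : i ∈ T1 ∪ T2 := Finset.mem_union_right _ h2
            rw [if_pos hin]
            constructor
            · intro _; exact ⟨hmem, h1⟩
            · intro _
              have := h2'.2
              omega
          · have hnin : i ∉ T1 ∪ T2 := by
              rw [Finset.mem_union]
              tauto
            rw [if_neg hnin, Nat.sub_zero]
            constructor
            · intro h; exact ⟨Finsupp.mem_support_iff.2 h, h1⟩
            · intro h; exact Finsupp.mem_support_iff.1 h.1
      have ht1S : T1.card ≤ S.card := Finset.card_le_card hT1S
      have hcard : (α - indic (T1 ∪ T2)).support.card = S.card - T1.card := by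
        rw [hsupp, Finset.card_sdiff_of_subset hT1S]
      -- weight relation
      have hindic01 : ∀ i, indic (T1 ∪ T2) i ≤ 1 := by
        intro i; rw [indic_apply]; split <;> omega
      have hindwt : ((indic (T1 ∪ T2)).sum fun _ v => v) = T1.card + T2.card := by
        rw [sum_eq_card_of_01 hindic01, indic_support, Finset.card_union_of_disjoint hdT]
      have hle : indic (T1 ∪ T2) ≤ α := by
        intro i
        rw [indic_apply]
        split
        case isTrue h =>
          have := Finsupp.mem_support_iff.1 (hTS h)
          omega
        case isFalse h => omega
      have hwt : ((α - indic (T1 ∪ T2)).sum fun _ v => v) + (T1.card + T2.card) = n := by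
        rw [← hindwt, ← wtsum, tsub_add_cancel_of_le hle, hα]
      -- combine signs
      have hsign : (-1:K)^(((α - indic (T1 ∪ T2)).sum fun _ v => v)
            + (α - indic (T1 ∪ T2)).support.card)
          = (-1:K)^(n + S.card) * (-1:K)^(T2.card) := by
        have he : n + S.card + T2.card
            = (((α - indic (T1 ∪ T2)).sum fun _ v => v)
              + (α - indic (T1 ∪ T2)).support.card) + 2*(T1.card + T2.card) := by
          rw [hcard]; omega
        rw [← pow_add]
        conv_rhs => rw [he, pow_add, pow_mul, neg_one_sq, one_pow]
        rw [mul_one]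
      rw [hsign, hcard]
    rw [Finset.sum_congr rfl (fun T1 hT1 => Finset.sum_congr rfl (fun T2 hT2 =>
      hval T1 hT1 T2 hT2))]
    -- factor the double sum
    have hfact : ∑ T1 ∈ A1.powerset, ∑ T2 ∈ A2.powerset,
        (c-1)^(S.card - T1.card) * ((-1:K)^(n + S.card) * (-1:K)^(T2.card))
        = (-1:K)^(n + S.card) * ((∑ T1 ∈ A1.powerset, (c-1)^(S.card - T1.card))
            * (∑ T2 ∈ A2.powerset, (-1:K)^(T2.card))) := by
      rw [Finset.sum_mul_sum, Finset.mul_sum]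
      apply Finset.sum_congr rfl
      intro T1 _
      rw [Finset.mul_sum]
      apply Finset.sum_congr rfl
      intro T2 _
      ring
    rw [hfact]
    by_cases hA2 : A2 = ∅
    · -- α is 0/1 valued
      have h01 : ∀ i, α i ≤ 1 := by
        intro i
        by_cases hi : α i = 0
        · omega
        · have hiS : i ∈ S := Finsupp.mem_support_iff.2 hi
          by_cases h1 : α i = 1
          · omega
          · exfalso
            have : i ∈ A2 := Finset.mem_filter.2 ⟨hiS, h1⟩
            rw [hA2] at this
            exact absurd this (Finset.notMem_empty i)
      have hun : S.card = n := by rw [← sum_eq_card_of_01 h01]; exact hα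
      have hA1S : A1 = S := by
        rw [← hu, hA2, Finset.union_empty]
      rw [if_pos ⟨h01, hun⟩, hA2, hA1S]
      rw [Finset.powerset_empty, Finset.sum_singleton, Finset.card_empty, pow_zero]
      rw [pow_powerset, sub_add_cancel, hun]
      rw [show n + n = 2*n by omega, pow_mul, neg_one_sq, one_pow]
      ring
    · -- alternating sum vanishes
      have hne : A2.Nonempty := Finset.nonempty_of_ne_empty hA2
      rw [alt_powerset A2 hne, mul_zero, mul_zero]
      rw [if_neg, mul_zero]
      rintro ⟨h01, -⟩
      obtain ⟨i, hi⟩ := hne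
      have hi' := Finset.mem_filter.1 hi
      have := Finsupp.mem_support_iff.1 hi'.1
      have := h01 i
      have := hi'.2
      omega

lemma prodform (r m : ℕ) :
    ∏ k ∈ range r, (qq^(m+r) - qq^k)
      = qq^(Nat.choose r 2) * (qq-1)^r * ∏ i ∈ range r, qNat qq (m+i+1) := by
  have hterm : ∀ k ∈ range r, qq^(m+r) - qq^k = qq^k * ((qq-1) * qNat qq (m+r-k)) := by
    intro k hk
    rw [Finset.mem_range] at hk
    rw [geom (m+r-k), mul_sub, ← pow_add qq k (m+r-k), show k + (m+r-k) = m+r by omega,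
      mul_one]
  rw [Finset.prod_congr rfl hterm, Finset.prod_mul_distrib, Finset.prod_mul_distrib]
  rw [Finset.prod_pow_eq_pow_sum, Finset.prod_const]
  have hsum : ∑ k ∈ range r, k = Nat.choose r 2 := by
    rw [Finset.sum_range_id, Nat.choose_two_right]
  rw [hsum]
  have hrefl : ∏ k ∈ range r, qNat qq (m+r-k) = ∏ i ∈ range r, qNat qq (m+i+1) := by
    rw [← Finset.prod_range_reflect (fun i => qNat qq (m+i+1)) r]
    apply Finset.prod_congr rfl
    intro k hk
    rw [Finset.mem_range] at hk
    rw [show m + (r-1-k) + 1 = m+r-k by omega]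
  rw [hrefl, Finset.card_range]
  ring

lemma Tident (r m : ℕ) :
    ∑ j ∈ Finset.Icc r (m+r), MvPolynomial.C (qFact qq r * (qq-1)^(j-r) * qStirling2 qq j r) *
      (∑ k ∈ range (m+r+1), MvPolynomial.C ((-1:K)^(k+j)) *
        (esymm (Fin N) K (m+r-k) * pnr N k j))
    = MvPolynomial.C (∏ i ∈ range r, qNat qq (m+i+1)) * esymm (Fin N) K (m+r) := by
  set n := m + r with hn
  set U : ℕ → MvPolynomial (Fin N) K := fun j => ∑ k ∈ range (n+1),
    MvPolynomial.C ((-1:K)^(k+j)) * (esymm (Fin N) K (n-k) * pnr N k j) with hU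
  have key : ∑ j ∈ range (n+1),
      MvPolynomial.C ((qq-1)^j * (qq^(Nat.choose r 2) * qFact qq r * qStirling2 qq j r)) * U j
      = MvPolynomial.C (qq^(Nat.choose r 2) * (qq-1)^r * ∏ i ∈ range r, qNat qq (m+i+1))
          * esymm (Fin N) K n := by
    have hcar : ∀ j, (qq-1)^j * (qq^(Nat.choose r 2) * qFact qq r * qStirling2 qq j r)
        = ∑ i ∈ range (r+1),
            ((-1:K)^(r+i) * qq^(Nat.choose (r-i) 2) * qBinom qq r i) * (qq^i - 1)^j := by
      intro j
      rw [← carlitz j r, Finset.mul_sum]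
      apply Finset.sum_congr rfl
      intro i _
      rw [← geom i, mul_pow]
      ring
    calc ∑ j ∈ range (n+1),
        MvPolynomial.C ((qq-1)^j * (qq^(Nat.choose r 2) * qFact qq r * qStirling2 qq j r)) * U j
        = ∑ j ∈ range (n+1), ∑ i ∈ range (r+1),
            MvPolynomial.C ((-1:K)^(r+i) * qq^(Nat.choose (r-i) 2) * qBinom qq r i)
              * (MvPolynomial.C ((qq^i - 1)^j) * U j) := by
          apply Finset.sum_congr rfl
          intro j _
          rw [hcar j, map_sum, Finset.sum_mul]
          apply Finset.sum_congr rfl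
          intro i _
          rw [map_mul, mul_assoc]
      _ = ∑ i ∈ range (r+1), MvPolynomial.C ((-1:K)^(r+i) * qq^(Nat.choose (r-i) 2)
            * qBinom qq r i) * ∑ j ∈ range (n+1), MvPolynomial.C ((qq^i - 1)^j) * U j := by
          rw [Finset.sum_comm]
          exact Finset.sum_congr rfl fun i _ => (Finset.mul_sum _ _ _).symm
      _ = ∑ i ∈ range (r+1), MvPolynomial.C ((-1:K)^(r+i) * qq^(Nat.choose (r-i) 2)
            * qBinom qq r i) * (MvPolynomial.C ((qq^i)^n) * esymm (Fin N) K n) := by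
          apply Finset.sum_congr rfl
          intro i _
          rw [L1 (qq^i) n]
      _ = MvPolynomial.C (∑ i ∈ range (r+1), (-1:K)^(r+i) * qq^(Nat.choose (r-i) 2)
            * qBinom qq r i * (qq^n)^i) * esymm (Fin N) K n := by
          rw [map_sum, Finset.sum_mul]
          apply Finset.sum_congr rfl
          intro i _
          rw [← pow_mul, ← pow_mul, mul_comm i n]
          conv_rhs => rw [map_mul, mul_assoc]
      _ = MvPolynomial.C (∏ k ∈ range r, (qq^n - qq^k)) * esymm (Fin N) K n := by
          rw [gauss r (qq^n)]
      _ = MvPolynomial.C (qq^(Nat.choose r 2) * (qq-1)^r * ∏ i ∈ range r, qNat qq (m+i+1))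
            * esymm (Fin N) K n := by rw [hn, prodform r m]
  -- restrict the range to Icc r n and cancel the common factor
  have hsub : ∑ j ∈ range (n+1),
      MvPolynomial.C ((qq-1)^j * (qq^(Nat.choose r 2) * qFact qq r * qStirling2 qq j r)) * U j
      = ∑ j ∈ Finset.Icc r n,
        MvPolynomial.C ((qq-1)^j * (qq^(Nat.choose r 2) * qFact qq r * qStirling2 qq j r))
          * U j := by
    symm
    apply Finset.sum_subset
    · intro j hj
      rw [Finset.mem_Icc] at hj
      rw [Finset.mem_range]
      omega
    · intro j hj hj2
      rw [Finset.mem_range] at hj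
      rw [Finset.mem_Icc] at hj2
      have : j < r := by omega
      rw [qStirling2_of_lt this, mul_zero, mul_zero, map_zero, zero_mul]
  rw [hsub] at key
  have hfac : ∀ j ∈ Finset.Icc r n,
      MvPolynomial.C ((qq-1)^j * (qq^(Nat.choose r 2) * qFact qq r * qStirling2 qq j r)) * U j
      = MvPolynomial.C (qq^(Nat.choose r 2) * (qq-1)^r)
          * (MvPolynomial.C (qFact qq r * (qq-1)^(j-r) * qStirling2 qq j r) * U j) := by
    intro j hj
    rw [Finset.mem_Icc] at hj
    obtain ⟨d, rfl⟩ : ∃ d, j = r + d := ⟨j - r, by omega⟩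
    have hs : (qq-1)^(r+d) * (qq^(Nat.choose r 2) * qFact qq r * qStirling2 qq (r+d) r)
        = (qq^(Nat.choose r 2) * (qq-1)^r)
          * (qFact qq r * (qq-1)^(r+d-r) * qStirling2 qq (r+d) r) := by
      rw [show r + d - r = d by omega, pow_add]
      ring
    rw [hs, map_mul, mul_assoc]
  rw [Finset.sum_congr rfl hfac, ← Finset.mul_sum] at key
  have hC : (MvPolynomial.C (qq^(Nat.choose r 2) * (qq-1)^r) : MvPolynomial (Fin N) K) ≠ 0 :=
    C_ne_zero (mul_ne_zero (pow_ne_zero _ qq_ne_zero) (pow_ne_zero _ qq_sub_one_ne))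
  apply mul_left_cancel₀ hC
  rw [key, ← mul_assoc, ← map_mul]

lemma antidiag_rev {M : Type*} [AddCommMonoid M] (m : ℕ) (f : ℕ → ℕ → M) :
    ∑ p ∈ Finset.HasAntidiagonal.antidiagonal m, f p.1 p.2 = ∑ b ∈ range (m+1), f (m-b) b := by
  rw [Finset.Nat.sum_antidiagonal_eq_sum_range_succ (fun a b => f a b) m]
  rw [← Finset.sum_range_reflect]
  apply Finset.sum_congr rfl
  intro b hb
  rw [Finset.mem_range] at hb
  rw [show m + 1 - 1 - b = m - b by omega, show m - (m-b) = b by omega]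

lemma range_to_icc {M : Type*} [AddCommMonoid M] (m r : ℕ) (f : ℕ → M) :
    ∑ b ∈ range (m+1), f b = ∑ k ∈ Finset.Icc r (m+r), f (k-r) := by
  apply Finset.sum_nbij' (i := fun b => b + r) (j := fun k => k - r)
  · intro b hb
    rw [Finset.mem_range] at hb
    rw [Finset.mem_Icc]
    omega
  · intro k hk
    rw [Finset.mem_Icc] at hk
    rw [Finset.mem_range]
    omega
  · intro b _
    omega
  · intro k hk
    rw [Finset.mem_Icc] at hk
    omega
  · intro b _
    rw [show b + r - r = b by omega]

lemma icc_swap {M : Type*} [AddCommMonoid M] (r n : ℕ) (f : ℕ → ℕ → M) :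
    ∑ k ∈ Finset.Icc r n, ∑ j ∈ Finset.Icc r k, f j k
      = ∑ j ∈ Finset.Icc r n, ∑ k ∈ Finset.Icc j n, f j k := by
  rw [Finset.sum_sigma', Finset.sum_sigma']
  apply Finset.sum_nbij' (i := fun p => ⟨p.2, p.1⟩) (j := fun p => ⟨p.2, p.1⟩)
  · rintro ⟨a, b⟩ hp
    simp only [Finset.mem_sigma, Finset.mem_Icc] at hp ⊢
    omega
  · rintro ⟨a, b⟩ hp
    simp only [Finset.mem_sigma, Finset.mem_Icc] at hp ⊢
    omega
  · rintro ⟨a, b⟩ _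
    rfl
  · rintro ⟨a, b⟩ _
    rfl
  · rintro ⟨a, b⟩ _
    rfl

lemma scal (r j k : ℕ) (hrj : r ≤ j) (hjk : j ≤ k) :
    qFact qq r * ((-1:K)^(k-r) * ((1 - qq)^(j-r) * qStirling2 qq j r))
      = qFact qq r * (qq-1)^(j-r) * qStirling2 qq j r * (-1:K)^(k+j) := by
  obtain ⟨d1, rfl⟩ : ∃ d1, j = r + d1 := ⟨j - r, by omega⟩
  obtain ⟨d2, rfl⟩ : ∃ d2, k = r + d1 + d2 := ⟨k - (r + d1), by omega⟩
  rw [show r + d1 + d2 - r = d1 + d2 by omega, show r + d1 - r = d1 by omega,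
    show r + d1 + d2 + (r + d1) = 2*(r + d1) + d2 by omega]
  have key : ((-1:K))^(d1+d2) * (-1:K)^d1 = (-1:K)^(2*(r+d1)+d2) := by
    rw [← pow_add]
    rcases Nat.even_or_odd (d1+d2+d1) with h | h
    · rw [h.neg_one_pow, (Nat.even_iff.2 (by have := Nat.even_iff.1 h; omega)).neg_one_pow]
    · rw [h.neg_one_pow, (Nat.odd_iff.2 (by have := Nat.odd_iff.1 h; omega)).neg_one_pow]
  have hneg : (1 - qq)^d1 = (-1:K)^d1 * (qq-1)^d1 := by
    rw [show (1 - qq) = (-1) * (qq-1) by ring, mul_pow]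
  calc qFact qq r * ((-1:K)^(d1+d2) * ((1 - qq)^d1 * qStirling2 qq (r+d1) r))
      = ((-1:K)^(d1+d2) * (-1:K)^d1) * (qFact qq r * (qq-1)^d1 * qStirling2 qq (r+d1) r) := by
        rw [hneg]
        ring
    _ = _ := by rw [key]; ring

end QAux

open QAux in
/-- The `q`-analog identity, as a series identity for the claimed value. -/
lemma Qser_eq (N r : ℕ)
    (Dq : PowerSeries (MvPolynomial (Fin N) K) → PowerSeries (MvPolynomial (Fin N) K))
    (hDq : IsqDeriv N Dq) :
    PowerSeries.C (MvPolynomial.C (qFact qq r)) * Eser N *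
      (PowerSeries.mk fun m => (-1 : MvPolynomial (Fin N) K) ^ m *
        ∑ j ∈ Finset.Icc r (m + r),
          MvPolynomial.C ((1 - qq) ^ (j - r) * qStirling2 qq j r) * pnr N (m + r) j)
      = Dq^[r] (Eser N) := by
  apply PowerSeries.ext
  intro m
  rw [coeff_Dq_iter hDq r m]
  rw [mul_assoc, PowerSeries.coeff_C_mul, PowerSeries.coeff_mul]
  simp only [Eser, PowerSeries.coeff_mk]
  set Qp : ℕ → MvPolynomial (Fin N) K := fun n' =>
    ∑ j ∈ Finset.Icc r n', MvPolynomial.C ((1 - qq) ^ (j - r) * qStirling2 qq j r) * pnr N n' j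
    with hQp
  rw [← Tident r m]
  calc MvPolynomial.C (qFact qq r) * ∑ p ∈ Finset.HasAntidiagonal.antidiagonal m,
        esymm (Fin N) K p.1 * ((-1 : MvPolynomial (Fin N) K)^p.2 * Qp (p.2 + r))
      = MvPolynomial.C (qFact qq r) * ∑ b ∈ Finset.range (m+1),
        esymm (Fin N) K (m-b) * ((-1 : MvPolynomial (Fin N) K)^b * Qp (b + r)) := by
        rw [antidiag_rev m (fun a b => esymm (Fin N) K a *
          ((-1 : MvPolynomial (Fin N) K)^b * Qp (b + r)))]
    _ = ∑ k ∈ Finset.Icc r (m+r), MvPolynomial.C (qFact qq r) *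
        (esymm (Fin N) K (m-(k-r)) * ((-1 : MvPolynomial (Fin N) K)^(k-r) * Qp (k-r+r))) := by
        rw [Finset.mul_sum, range_to_icc m r (fun b => MvPolynomial.C (qFact qq r) *
          (esymm (Fin N) K (m-b) * ((-1 : MvPolynomial (Fin N) K)^b * Qp (b + r))))]
    _ = ∑ k ∈ Finset.Icc r (m+r), ∑ j ∈ Finset.Icc r k,
        MvPolynomial.C (qFact qq r * (qq-1)^(j-r) * qStirling2 qq j r) *
          (MvPolynomial.C ((-1:K)^(k+j)) * (esymm (Fin N) K (m+r-k) * pnr N k j)) := by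
        apply Finset.sum_congr rfl
        intro k hk
        rw [Finset.mem_Icc] at hk
        rw [show k - r + r = k by omega, show m - (k-r) = m+r-k by omega, hQp]
        rw [Finset.mul_sum, Finset.mul_sum, Finset.mul_sum]
        apply Finset.sum_congr rfl
        intro j hj
        rw [Finset.mem_Icc] at hj
        have hm1 : ((-1 : MvPolynomial (Fin N) K)) = MvPolynomial.C (-1 : K) := by
          rw [map_neg, map_one]
        rw [hm1, ← map_pow]
        rw [show MvPolynomial.C ((-1:K)^(k-r)) *
            (MvPolynomial.C ((1 - qq)^(j-r) * qStirling2 qq j r) * pnr N k j)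
          = (MvPolynomial.C ((-1:K)^(k-r)) * MvPolynomial.C ((1 - qq)^(j-r)
              * qStirling2 qq j r)) * pnr N k j by ring]
        rw [← map_mul]
        rw [show esymm (Fin N) K (m+r-k) * (MvPolynomial.C ((-1:K)^(k-r) * ((1 - qq)^(j-r)
            * qStirling2 qq j r)) * pnr N k j)
          = MvPolynomial.C ((-1:K)^(k-r) * ((1 - qq)^(j-r) * qStirling2 qq j r))
            * (esymm (Fin N) K (m+r-k) * pnr N k j) by ring]
        rw [← mul_assoc, ← map_mul, scal r j k hj.1 hj.2, map_mul]
        ring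
    _ = ∑ j ∈ Finset.Icc r (m+r), ∑ k ∈ Finset.Icc j (m+r),
        MvPolynomial.C (qFact qq r * (qq-1)^(j-r) * qStirling2 qq j r) *
          (MvPolynomial.C ((-1:K)^(k+j)) * (esymm (Fin N) K (m+r-k) * pnr N k j)) :=
        icc_swap r (m+r) _
    _ = ∑ j ∈ Finset.Icc r (m+r),
        MvPolynomial.C (qFact qq r * (qq-1)^(j-r) * qStirling2 qq j r) *
          ∑ k ∈ Finset.range (m+r+1), MvPolynomial.C ((-1:K)^(k+j)) *
            (esymm (Fin N) K (m+r-k) * pnr N k j) := by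
        apply Finset.sum_congr rfl
        intro j hj
        rw [Finset.mem_Icc] at hj
        rw [Finset.mul_sum]
        apply Finset.sum_subset
        · intro k hk
          rw [Finset.mem_Icc] at hk
          rw [Finset.mem_range]
          omega
        · intro k hk hk2
          rw [Finset.mem_range] at hk
          rw [Finset.mem_Icc] at hk2
          have : k < j := by omega
          rw [pnr_zero this, mul_zero, mul_zero, mul_zero]

/-- for all `n ≥ r ≥ 1`,
`[p_n^{(r)}]_q = ∑_{j=r}^n (1−q)^{j−r} S_q[j,r] p_n^{(j)}`. -/
theorem qAnalog_eq_sum_qStirling (N n r : ℕ) (hN : n ≤ N) (hr : 1 ≤ r) (hrn : r ≤ n)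
    (Dq : PowerSeries (MvPolynomial (Fin N) K) → PowerSeries (MvPolynomial (Fin N) K))
    (hDq : IsqDeriv N Dq)
    (P : ℕ → ℕ → MvPolynomial (Fin N) K) (hP : IsqAnalog N Dq P) :
    P n r =
      ∑ j ∈ Finset.Icc r n,
        MvPolynomial.C ((1 - qq) ^ (j - r) * qStirling2 qq j r) * pnr N n j := by
  have hQ := Qser_eq N r Dq hDq
  have heq := (hP r).trans hQ.symm
  have hCne : (PowerSeries.C (R := MvPolynomial (Fin N) K) (MvPolynomial.C (qFact qq r))) ≠ 0 := by
    intro h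
    have h2 := congrArg (PowerSeries.constantCoeff) h
    rw [PowerSeries.constantCoeff_C, map_zero] at h2
    exact QAux.C_ne_zero (QAux.qFact_ne_zero r) h2
  have hEne : Eser N ≠ 0 := by
    intro h
    have h2 := congrArg (PowerSeries.coeff 0) h
    rw [map_zero, Eser, PowerSeries.coeff_mk, MvPolynomial.esymm_zero] at h2
    exact one_ne_zero h2
  have hmk := mul_left_cancel₀ (mul_ne_zero hCne hEne) heq
  have hco := congrArg (PowerSeries.coeff (n - r)) hmk
  rw [PowerSeries.coeff_mk, PowerSeries.coeff_mk, show n - r + r = n by omega] at hco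
  exact mul_left_cancel₀ (pow_ne_zero _ (neg_ne_zero.2 (one_ne_zero))) hco
end
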